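/- Assume c0 ≥ 1, d_max ≥ 1, and let d* be an integer with 1 ≤ d* < d_max. Let α > 0 and let μ : [0, ∞) → ℝ be differentiable with μ(0) = 0 and μ'(t) = (α/(n√K))·(d* − F(μ(t))) for all t ≥ 0. Then: (i) there exists a unique μ* ∈ ℝ with F(μ*) = d*; (ii) μ(t) converges monotonically to μ* as t → ∞ (non-decreasing if F(0) ≤ d*, non-increasing if F(0) > d*); and (iii) there exist constants γ > 0 and C ≥ 0 such that |μ(t) − μ*| ≤ C·e^{−γ t} for all t ≥ 0. -/

import Mathlib

open Finset Filter Matrix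

variable {V : Type*}

/-- `ball E r j` : set of vertices reachable from `r` within `j` steps along edges in `E`. -/
def ball [Fintype V] [DecidableEq V] (E : Finset (V × V)) (r : V) : ℕ → Finset V
  | 0 => {r}
  | j + 1 => Finset.univ.filter fun v => v ∈ ball E r j ∨ ∃ u ∈ ball E r j, (u, v) ∈ E

/-- in-degree of `v` restricted to sources in `N_c`. -/
def degc [Fintype V] [DecidableEq V] (E : Finset (V × V)) (r : V) (c : ℕ) (v : V) : ℕ :=
  ((ball E r c).filter fun u => (u, v) ∈ E).card

/-- λ = 1/√K with K = |N_c|. -/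
noncomputable def lamc [Fintype V] [DecidableEq V] (E : Finset (V × V)) (r : V) (c : ℕ) : ℝ :=
  1 / Real.sqrt ((ball E r c).card : ℝ)

/-- the logit ξ_v(μ). -/
noncomputable def xi [Fintype V] [DecidableEq V] (E : Finset (V × V)) (r : V) (c : ℕ)
    (μ : V → ℝ) (v : V) : ℝ :=
  lamc E r c * (if v ∈ ball E r c then 1 else 0)
    + lamc E r c * ∑ u ∈ (ball E r c).filter (fun u => (u, v) ∈ E), μ u

/-- BFS loss. -/
noncomputable def bfsLoss [Fintype V] [DecidableEq V] (E : Finset (V × V)) (r : V) (c : ℕ)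
    (μ : V → ℝ) : ℝ :=
  - Real.log ((∑ v ∈ ball E r (c + 1), Real.exp (xi E r c μ v)) /
      ∑ v : V, Real.exp (xi E r c μ v))

/-- edge set of the permuted instance. -/
def permE [Fintype V] [DecidableEq V] (π : Equiv.Perm V) (E : Finset (V × V)) :
    Finset (V × V) :=
  E.image fun e => (π e.1, π e.2)

/-- permutation-averaged BFS loss. -/
noncomputable def avgBfsLoss [Fintype V] [DecidableEq V] (E : Finset (V × V)) (r : V) (c : ℕ)
    (μ : V → ℝ) : ℝ :=
  ((Nat.factorial (Fintype.card V) : ℝ))⁻¹ *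
    ∑ π : Equiv.Perm V, bfsLoss (permE π E) (π r) c μ

/-- coconut loss with target `p`. -/
noncomputable def cocoLoss [Fintype V] [DecidableEq V] (E : Finset (V × V)) (r : V) (c : ℕ)
    (p : V) (μ : V → ℝ) : ℝ :=
  - Real.log (Real.exp (xi E r c μ p) / ∑ v : V, Real.exp (xi E r c μ v))

/-- permutation-averaged coconut loss. -/
noncomputable def avgCocoLoss [Fintype V] [DecidableEq V] (E : Finset (V × V)) (r : V) (c : ℕ)
    (p : V) (μ : V → ℝ) : ℝ :=
  ((Nat.factorial (Fintype.card V) : ℝ))⁻¹ *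
    ∑ π : Equiv.Perm V, cocoLoss (permE π E) (π r) c (π p) μ

/-- the scalar function F. -/
noncomputable def Fc [Fintype V] [DecidableEq V] (E : Finset (V × V)) (r : V) (c : ℕ)
    (x : ℝ) : ℝ :=
  (∑ u ∈ ball E r (c + 1), (degc E r c u : ℝ) *
      Real.exp (lamc E r c * ((if u ∈ ball E r c then 1 else 0) + x * (degc E r c u : ℝ))))
    / ((∑ u ∈ ball E r (c + 1),
        Real.exp (lamc E r c * ((if u ∈ ball E r c then 1 else 0) + x * (degc E r c u : ℝ))))
      + ((Fintype.card V : ℝ) - ((ball E r (c + 1)).card : ℝ)))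


open Set Filter Real

lemma posPartSq_hasDerivAt (x : ℝ) :
    HasDerivAt (fun y : ℝ => max y 0 ^ 2) (2 * max x 0) x := by
  rcases lt_trichotomy x 0 with hx | hx | hx
  · have h : HasDerivAt (fun _ : ℝ => (0:ℝ)) 0 x := hasDerivAt_const x 0
    have he : (fun y : ℝ => max y 0 ^ 2) =ᶠ[nhds x] fun _ => (0:ℝ) := by
      filter_upwards [Iio_mem_nhds hx] with y hy
      have : y < 0 := hy
      simp [max_eq_right this.le]
    have := h.congr_of_eventuallyEq he
    simpa [max_eq_right hx.le] using this
  · subst hx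
    rw [hasDerivAt_iff_tendsto_slope]
    have hb : ∀ y : ℝ, |slope (fun y : ℝ => max y 0 ^ 2) 0 y| ≤ |y| := by
      intro y
      rcases eq_or_ne y 0 with rfl | hy
      · simp [slope]
      · rw [slope_def_field]
        rcases le_or_gt y 0 with h | h
        · simp [max_eq_right h]
        · have : max y 0 = y := max_eq_left h.le
          rw [this]
          have : (y ^ 2 - max (0:ℝ) 0 ^ 2) / (y - 0) = y := by
            field_simp; simp; ring
          rw [this]
    have h0 : Tendsto (fun y : ℝ => |y|) (nhdsWithin 0 {(0:ℝ)}ᶜ) (nhds 0) := by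
      have : Tendsto (fun y : ℝ => |y|) (nhds (0:ℝ)) (nhds 0) := by
        simpa using continuous_abs.tendsto (0:ℝ)
      exact this.mono_left nhdsWithin_le_nhds
    have : Tendsto (fun y => |slope (fun y : ℝ => max y 0 ^ 2) 0 y|)
        (nhdsWithin 0 {(0:ℝ)}ᶜ) (nhds 0) :=
      squeeze_zero (fun y => abs_nonneg _) hb h0
    have := tendsto_zero_iff_abs_tendsto_zero _ |>.2 this
    simpa using this
  · have h : HasDerivAt (fun y : ℝ => y ^ 2) (2 * x) x := by
      simpa [mul_comm] using hasDerivAt_pow 2 x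
    have he : (fun y : ℝ => max y 0 ^ 2) =ᶠ[nhds x] fun y => y ^ 2 := by
      filter_upwards [Ioi_mem_nhds hx] with y hy
      have : 0 < y := hy
      simp [max_eq_left this.le]
    have := h.congr_of_eventuallyEq he
    simpa [max_eq_left hx.le] using this

lemma monoOn_of_derivIci (f f' : ℝ → ℝ)
    (hd : ∀ t ∈ Ici (0:ℝ), HasDerivWithinAt f (f' t) (Ici 0) t)
    (hp : ∀ t ∈ Ici (0:ℝ), 0 ≤ f' t) : MonotoneOn f (Ici 0) := by
  apply monotoneOn_of_deriv_nonneg (convex_Ici 0)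
    (fun t ht => (hd t ht).continuousWithinAt)
  · intro x hx
    rw [interior_Ici] at hx
    exact ((hd x (le_of_lt hx : (0:ℝ) ≤ x)).hasDerivAt (Ici_mem_nhds hx)).differentiableAt.differentiableWithinAt
  · intro x hx
    rw [interior_Ici] at hx
    rw [((hd x (le_of_lt hx : (0:ℝ) ≤ x)).hasDerivAt (Ici_mem_nhds hx)).deriv]
    exact hp x (le_of_lt hx : (0:ℝ) ≤ x)

lemma antiOn_of_derivIci (f f' : ℝ → ℝ)
    (hd : ∀ t ∈ Ici (0:ℝ), HasDerivWithinAt f (f' t) (Ici 0) t)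
    (hp : ∀ t ∈ Ici (0:ℝ), f' t ≤ 0) : AntitoneOn f (Ici 0) := by
  apply antitoneOn_of_deriv_nonpos (convex_Ici 0)
    (fun t ht => (hd t ht).continuousWithinAt)
  · intro x hx
    rw [interior_Ici] at hx
    exact ((hd x (le_of_lt hx : (0:ℝ) ≤ x)).hasDerivAt (Ici_mem_nhds hx)).differentiableAt.differentiableWithinAt
  · intro x hx
    rw [interior_Ici] at hx
    rw [((hd x (le_of_lt hx : (0:ℝ) ≤ x)).hasDerivAt (Ici_mem_nhds hx)).deriv]
    exact hp x (le_of_lt hx : (0:ℝ) ≤ x)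

lemma odeMain (G G' : ℝ → ℝ) (hG : ∀ x, HasDerivAt G (G' x) x)
    (hG'pos : ∀ x, 0 < G' x) (hG'cont : Continuous G')
    (d mstar : ℝ) (hm : G mstar = d)
    (k : ℝ) (hk : 0 < k) (μ : ℝ → ℝ) (hinit : μ 0 = 0)
    (hode : ∀ t ∈ Set.Ici (0:ℝ),
      HasDerivWithinAt μ (k * (d - G (μ t))) (Set.Ici 0) t) :
    Tendsto μ atTop (nhds mstar)
      ∧ (G 0 ≤ d → MonotoneOn μ (Ici 0))
      ∧ (d < G 0 → AntitoneOn μ (Ici 0))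
      ∧ ∃ γ : ℝ, 0 < γ ∧ ∃ C : ℝ, 0 ≤ C ∧
          ∀ t ∈ Ici (0:ℝ), |μ t - mstar| ≤ C * Real.exp (-γ * t) := by
  have hsm : StrictMono G := strictMono_of_deriv_pos fun x => by
    rw [(hG x).deriv]; exact hG'pos x
  -- upper invariance
  have upper : ∀ b : ℝ, 0 ≤ b → d ≤ G b → ∀ t ∈ Ici (0:ℝ), μ t ≤ b := by
    intro b hb0 hGb
    have hder : ∀ t ∈ Ici (0:ℝ),
        HasDerivWithinAt (fun t => max (μ t - b) 0 ^ 2)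
          (2 * max (μ t - b) 0 * (k * (d - G (μ t)))) (Ici 0) t := by
      intro t ht
      exact (posPartSq_hasDerivAt (μ t - b)).comp_hasDerivWithinAt t
        ((hode t ht).sub_const b)
    have hanti : AntitoneOn (fun t => max (μ t - b) 0 ^ 2) (Ici 0) := by
      apply antiOn_of_derivIci _ _ hder
      intro t ht
      rcases le_or_gt (μ t) b with h | h
      · simp [max_eq_right (sub_nonpos.2 h)]
      · have h1 : 0 ≤ 2 * max (μ t - b) 0 := by positivity
        have h2 : k * (d - G (μ t)) ≤ 0 := by
          have : G b < G (μ t) := hsm h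
          nlinarith
        exact mul_nonpos_of_nonneg_of_nonpos h1 h2
    intro t ht
    have this2 : max (μ t - b) 0 ^ 2 ≤ max (μ 0 - b) 0 ^ 2 := hanti (self_mem_Ici) ht ht
    have h0 : max (μ 0 - b) 0 = 0 := by
      rw [hinit]; exact max_eq_right (by linarith)
    rw [h0] at this2
    have this := this2
    simp only [ne_eq, OfNat.ofNat_ne_zero, not_false_eq_true, zero_pow] at this
    have hz : max (μ t - b) 0 ^ 2 = 0 := le_antisymm this (by positivity)
    have := pow_eq_zero_iff (n := 2) (by norm_num) |>.1 hz
    have : μ t - b ≤ 0 := by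
      by_contra hc
      push_neg at hc
      rw [max_eq_left hc.le] at this
      linarith
    linarith
  -- lower invariance
  have lower : ∀ a : ℝ, a ≤ 0 → G a ≤ d → ∀ t ∈ Ici (0:ℝ), a ≤ μ t := by
    intro a ha0 hGa
    have hder : ∀ t ∈ Ici (0:ℝ),
        HasDerivWithinAt (fun t => max (a - μ t) 0 ^ 2)
          (2 * max (a - μ t) 0 * -(k * (d - G (μ t)))) (Ici 0) t := by
      intro t ht
      exact (posPartSq_hasDerivAt (a - μ t)).comp_hasDerivWithinAt t
        ((hode t ht).const_sub a)
    have hanti : AntitoneOn (fun t => max (a - μ t) 0 ^ 2) (Ici 0) := by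
      apply antiOn_of_derivIci _ _ hder
      intro t ht
      rcases le_or_gt a (μ t) with h | h
      · simp [max_eq_right (sub_nonpos.2 h)]
      · have h1 : 0 ≤ 2 * max (a - μ t) 0 := by positivity
        have h2 : -(k * (d - G (μ t))) ≤ 0 := by
          have : G (μ t) < G a := hsm h
          nlinarith
        exact mul_nonpos_of_nonneg_of_nonpos h1 h2
    intro t ht
    have this2 : max (a - μ t) 0 ^ 2 ≤ max (a - μ 0) 0 ^ 2 := hanti (self_mem_Ici) ht ht
    have h0 : max (a - μ 0) 0 = 0 := by
      rw [hinit]; exact max_eq_right (by linarith)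
    rw [h0] at this2
    have this := this2
    simp only [ne_eq, OfNat.ofNat_ne_zero, not_false_eq_true, zero_pow] at this
    have hz : max (a - μ t) 0 ^ 2 = 0 := le_antisymm this (by positivity)
    have := pow_eq_zero_iff (n := 2) (by norm_num) |>.1 hz
    have : a - μ t ≤ 0 := by
      by_contra hc
      push_neg at hc
      rw [max_eq_left hc.le] at this
      linarith
    linarith
  -- the compact invariant interval
  set a := min mstar 0 with ha_def
  set b := max mstar 0 with hb_def
  have hGa : G a ≤ d := hm ▸ hsm.monotone (min_le_left _ _)
  have hGb : d ≤ G b := hm ▸ hsm.monotone (le_max_left _ _)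
  have hmem : ∀ t ∈ Ici (0:ℝ), μ t ∈ Icc a b := fun t ht =>
    ⟨lower a (min_le_right _ _) hGa t ht, upper b (le_max_right _ _) hGb t ht⟩
  have hab : a ≤ b := (min_le_left _ _).trans (le_max_left _ _)
  have hmstar_mem : mstar ∈ Icc a b := ⟨min_le_left _ _, le_max_left _ _⟩
  -- minimum of G' on [a,b]
  obtain ⟨x₀, hx₀, hminG'⟩ := isCompact_Icc.exists_isMinOn ⟨mstar, hmstar_mem⟩
    hG'cont.continuousOn
  have hminG : ∀ y ∈ Icc a b, G' x₀ ≤ G' y := fun y hy => hminG' hy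
  set m := G' x₀ with hm_def
  have hmpos : 0 < m := hG'pos x₀
  -- key inequality
  have key : ∀ x ∈ Icc a b, m * (x - mstar) ^ 2 ≤ (x - mstar) * (G x - d) := by
    intro x hx
    rcases lt_trichotomy x mstar with h | h | h
    · obtain ⟨ξ, hξ, hslope⟩ := exists_hasDerivAt_eq_slope G G' h
        (fun y _ => (hG y).continuousAt.continuousWithinAt) (fun y _ => hG y)
      have hξmem : ξ ∈ Icc a b := ⟨hx.1.trans hξ.1.le, hξ.2.le.trans hmstar_mem.2⟩
      have hmξ : m ≤ G' ξ := hminG ξ hξmem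
      have : G mstar - G x = G' ξ * (mstar - x) := by
        rw [eq_div_iff (by linarith : mstar - x ≠ 0)] at hslope
        linarith [hslope]
      nlinarith [sq_nonneg (x - mstar)]
    · subst h; simp [hm]
    · obtain ⟨ξ, hξ, hslope⟩ := exists_hasDerivAt_eq_slope G G' h
        (fun y _ => (hG y).continuousAt.continuousWithinAt) (fun y _ => hG y)
      have hξmem : ξ ∈ Icc a b := ⟨hmstar_mem.1.trans hξ.1.le, hξ.2.le.trans hx.2⟩
      have hmξ : m ≤ G' ξ := hminG ξ hξmem
      have : G x - G mstar = G' ξ * (x - mstar) := by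
        rw [eq_div_iff (by linarith : x - mstar ≠ 0)] at hslope
        linarith [hslope]
      nlinarith [sq_nonneg (x - mstar)]
  set γ := k * m with hγ_def
  have hγpos : 0 < γ := mul_pos hk hmpos
  -- energy decay
  have decay : ∀ t ∈ Ici (0:ℝ),
      (μ t - mstar) ^ 2 ≤ mstar ^ 2 * Real.exp (-(2*γ) * t) := by
    have hq : ∀ t ∈ Ici (0:ℝ),
        HasDerivWithinAt (fun t => (μ t - mstar) ^ 2 * Real.exp (2*γ*t))
          ((2 * (μ t - mstar) ^ 1 * (k * (d - G (μ t)))) * Real.exp (2*γ*t)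
            + (μ t - mstar) ^ 2 * (Real.exp (2*γ*t) * (2*γ))) (Ici 0) t := by
      intro t ht
      have h1 : HasDerivWithinAt (fun t => (μ t - mstar) ^ 2)
          (2 * (μ t - mstar) ^ 1 * (k * (d - G (μ t)))) (Ici 0) t := by
        simpa using ((hode t ht).sub_const mstar).fun_pow 2
      have h2 : HasDerivWithinAt (fun t : ℝ => Real.exp (2*γ*t))
          (Real.exp (2*γ*t) * (2*γ)) (Ici 0) t := by
        have := ((hasDerivAt_id t).const_mul (2*γ)).exp
        simpa [mul_comm] using this.hasDerivWithinAt
      exact h1.mul h2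
    have hanti : AntitoneOn (fun t => (μ t - mstar) ^ 2 * Real.exp (2*γ*t)) (Ici 0) := by
      apply antiOn_of_derivIci _ _ hq
      intro t ht
      have hkey := key (μ t) (hmem t ht)
      have hexp : 0 < Real.exp (2*γ*t) := Real.exp_pos _
      have : 2 * (μ t - mstar) * (k * (d - G (μ t))) + (μ t - mstar)^2 * (2*γ) ≤ 0 := by
        have : (μ t - mstar) * (k * (d - G (μ t))) = -k * ((μ t - mstar) * (G (μ t) - d)) := by ring
        nlinarith
      calc 2 * (μ t - mstar) ^ 1 * (k * (d - G (μ t))) * Real.exp (2*γ*t)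
            + (μ t - mstar) ^ 2 * (Real.exp (2*γ*t) * (2*γ))
          = (2 * (μ t - mstar) * (k * (d - G (μ t))) + (μ t - mstar)^2 * (2*γ))
            * Real.exp (2*γ*t) := by ring
        _ ≤ 0 := mul_nonpos_of_nonpos_of_nonneg this hexp.le
    intro t ht
    have this : (μ t - mstar)^2 * Real.exp (2*γ*t) ≤ (μ 0 - mstar)^2 * Real.exp (2*γ*0) := hanti self_mem_Ici ht ht
    rw [hinit] at this
    have h0 : (0 - mstar)^2 * Real.exp (2*γ*0) = mstar ^ 2 := by
      simp
    rw [h0] at this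
    have hexp : 0 < Real.exp (2*γ*t) := Real.exp_pos _
    have heq : Real.exp (-(2*γ) * t) = (Real.exp (2*γ*t))⁻¹ := by
      rw [← Real.exp_neg]; ring_nf
    rw [heq]
    rw [← le_div_iff₀ hexp] at this
    rwa [div_eq_mul_inv] at this
  -- exponential bound
  have habs : ∀ t ∈ Ici (0:ℝ), |μ t - mstar| ≤ |mstar| * Real.exp (-γ * t) := by
    intro t ht
    have h1 := decay t ht
    have h2 : mstar ^ 2 * Real.exp (-(2*γ) * t) = (|mstar| * Real.exp (-γ * t))^2 := by
      rw [mul_pow, ← Real.exp_nat_mul, sq_abs]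
      ring_nf
    rw [h2] at h1
    have := Real.sqrt_le_sqrt h1
    rwa [Real.sqrt_sq_eq_abs, Real.sqrt_sq (by positivity)] at this
  refine ⟨?_, ?_, ?_, γ, hγpos, |mstar|, abs_nonneg _, habs⟩
  · -- tendsto
    rw [tendsto_iff_norm_sub_tendsto_zero]
    apply squeeze_zero' (f := fun t => ‖μ t - mstar‖)
      (g := fun t => |mstar| * Real.exp (-γ * t))
    · exact Eventually.of_forall fun t => norm_nonneg _
    · filter_upwards [eventually_ge_atTop (0:ℝ)] with t ht
      exact habs t ht
    · rw [show (0:ℝ) = |mstar| * 0 by ring]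
      apply Tendsto.const_mul
      apply Real.tendsto_exp_atBot.comp
      exact tendsto_id.const_mul_atTop_of_neg (by linarith)
  · intro hG0
    have hms : 0 ≤ mstar := by
      by_contra hc
      push_neg at hc
      have := hsm hc
      rw [hm] at this
      linarith
    apply monoOn_of_derivIci _ _ hode
    intro t ht
    have : μ t ≤ mstar := upper mstar hms (le_of_eq hm.symm) t ht
    have : G (μ t) ≤ d := hm ▸ hsm.monotone this
    nlinarith
  · intro hG0
    have hms : mstar ≤ 0 := by
      by_contra hc
      push_neg at hc
      have := hsm hc
      rw [hm] at this
      linarith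
    apply antiOn_of_derivIci _ _ hode
    intro t ht
    have : mstar ≤ μ t := lower mstar hms (le_of_eq hm) t ht
    have : d ≤ G (μ t) := hm ▸ hsm.monotone this
    nlinarith

section Concrete
variable {V : Type*} [Fintype V] [DecidableEq V]

noncomputable def chiF (E : Finset (V × V)) (r : V) (c : ℕ) (u : V) : ℝ :=
  if u ∈ ball E r c then 1 else 0

noncomputable def wF (E : Finset (V × V)) (r : V) (c : ℕ) (x : ℝ) (u : V) : ℝ :=
  Real.exp (lamc E r c * (chiF E r c u + x * (degc E r c u : ℝ)))

noncomputable def numF (E : Finset (V × V)) (r : V) (c : ℕ) (x : ℝ) : ℝ :=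
  ∑ u ∈ ball E r (c+1), (degc E r c u : ℝ) * wF E r c x u

noncomputable def denF (E : Finset (V × V)) (r : V) (c : ℕ) (x : ℝ) : ℝ :=
  (∑ u ∈ ball E r (c+1), wF E r c x u)
    + ((Fintype.card V : ℝ) - ((ball E r (c+1)).card : ℝ))

noncomputable def sqFc (E : Finset (V × V)) (r : V) (c : ℕ) (x : ℝ) : ℝ :=
  ∑ u ∈ ball E r (c+1), (degc E r c u : ℝ)^2 * wF E r c x u

noncomputable def FcD (E : Finset (V × V)) (r : V) (c : ℕ) (x : ℝ) : ℝ :=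
  (lamc E r c * sqFc E r c x * denF E r c x
      - numF E r c x * (lamc E r c * numF E r c x)) / denF E r c x ^ 2

variable (E : Finset (V × V)) (r : V) (c : ℕ)

lemma Fc_eq (x : ℝ) : Fc E r c x = numF E r c x / denF E r c x := rfl

lemma ball_succ (j : ℕ) : ball E r (j+1) =
    Finset.univ.filter fun v => v ∈ ball E r j ∨ ∃ u ∈ ball E r j, (u, v) ∈ E := rfl

lemma mem_ball_self : ∀ j, r ∈ ball E r j
  | 0 => by simp [ball]
  | (j+1) => by
      rw [ball_succ]
      exact Finset.mem_filter.2 ⟨Finset.mem_univ r, Or.inl (mem_ball_self j)⟩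

lemma lamc_pos : 0 < lamc E r c := by
  have h : 0 < (ball E r c).card := Finset.card_pos.2 ⟨r, mem_ball_self E r c⟩
  have : (0:ℝ) < ((ball E r c).card : ℝ) := by exact_mod_cast h
  unfold lamc
  positivity

lemma wF_pos (x : ℝ) (u : V) : 0 < wF E r c x u := Real.exp_pos _

lemma wF_hasDerivAt (x : ℝ) (u : V) :
    HasDerivAt (fun x => wF E r c x u)
      (lamc E r c * (degc E r c u : ℝ) * wF E r c x u) x := by
  have h : HasDerivAt (fun x : ℝ => lamc E r c * (chiF E r c u + x * (degc E r c u : ℝ)))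
      (lamc E r c * (1 * (degc E r c u : ℝ))) x :=
    (((hasDerivAt_id x).mul_const _).const_add _).const_mul _
  have h2 := h.exp
  unfold wF
  convert h2 using 1
  ring

lemma numF_hasDerivAt (x : ℝ) :
    HasDerivAt (numF E r c) (lamc E r c * sqFc E r c x) x := by
  have h : HasDerivAt (fun x => ∑ u ∈ ball E r (c+1), (degc E r c u : ℝ) * wF E r c x u)
      (∑ u ∈ ball E r (c+1), (degc E r c u : ℝ)
        * (lamc E r c * (degc E r c u : ℝ) * wF E r c x u)) x :=
    HasDerivAt.fun_sum fun u _ => (wF_hasDerivAt E r c x u).const_mul _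
  have heq : (∑ u ∈ ball E r (c+1), (degc E r c u : ℝ)
        * (lamc E r c * (degc E r c u : ℝ) * wF E r c x u))
      = lamc E r c * sqFc E r c x := by
    unfold sqFc
    rw [Finset.mul_sum]
    exact Finset.sum_congr rfl fun u _ => by ring
  rw [heq] at h
  exact h

lemma denF_hasDerivAt (x : ℝ) :
    HasDerivAt (denF E r c) (lamc E r c * numF E r c x) x := by
  have h : HasDerivAt (fun x => ∑ u ∈ ball E r (c+1), wF E r c x u)
      (∑ u ∈ ball E r (c+1), lamc E r c * (degc E r c u : ℝ) * wF E r c x u) x :=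
    HasDerivAt.fun_sum fun u _ => wF_hasDerivAt E r c x u
  have heq : (∑ u ∈ ball E r (c+1), lamc E r c * (degc E r c u : ℝ) * wF E r c x u)
      = lamc E r c * numF E r c x := by
    unfold numF
    rw [Finset.mul_sum]
    exact Finset.sum_congr rfl fun u _ => by ring
  rw [heq] at h
  exact h.add_const _

lemma denF_ge_one (hc0 : (ball E r (c + 1)).card + 1 ≤ Fintype.card V) (x : ℝ) :
    1 ≤ denF E r c x := by
  have h1 : ((ball E r (c+1)).card : ℝ) + 1 ≤ (Fintype.card V : ℝ) := by exact_mod_cast hc0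
  have h2 : (0:ℝ) ≤ ∑ u ∈ ball E r (c+1), wF E r c x u :=
    Finset.sum_nonneg fun u _ => (wF_pos E r c x u).le
  unfold denF
  linarith

lemma denF_pos (hc0 : (ball E r (c + 1)).card + 1 ≤ Fintype.card V) (x : ℝ) :
    0 < denF E r c x := lt_of_lt_of_le one_pos (denF_ge_one E r c hc0 x)

lemma numF_nonneg (x : ℝ) : 0 ≤ numF E r c x :=
  Finset.sum_nonneg fun u _ => mul_nonneg (Nat.cast_nonneg _) (wF_pos E r c x u).le

lemma maxdeg_mem (hdmax : 1 ≤ Finset.univ.sup (degc E r c)) :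
    ∃ v ∈ ball E r (c+1), degc E r c v = Finset.univ.sup (degc E r c) := by
  obtain ⟨v, -, hv⟩ := Finset.exists_mem_eq_sup (Finset.univ : Finset V)
    ⟨r, Finset.mem_univ r⟩ (degc E r c)
  refine ⟨v, ?_, hv.symm⟩
  have h1 : 1 ≤ degc E r c v := hv ▸ hdmax
  have : ((ball E r c).filter fun u => (u, v) ∈ E).Nonempty :=
    Finset.card_pos.1 (lt_of_lt_of_le one_pos h1)
  obtain ⟨u, hu⟩ := this
  rw [Finset.mem_filter] at hu
  rw [ball_succ]
  exact Finset.mem_filter.2 ⟨Finset.mem_univ v, Or.inr ⟨u, hu.1, hu.2⟩⟩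

lemma sqFc_pos (hdmax : 1 ≤ Finset.univ.sup (degc E r c)) (x : ℝ) :
    0 < sqFc E r c x := by
  obtain ⟨v, hvA, hvD⟩ := maxdeg_mem E r c hdmax
  have h1 : 1 ≤ degc E r c v := hvD ▸ hdmax
  have h2 : (0:ℝ) < (degc E r c v : ℝ)^2 * wF E r c x v := by
    have : (0:ℝ) < (degc E r c v : ℝ) := by exact_mod_cast h1
    have := wF_pos E r c x v
    positivity
  calc (0:ℝ) < (degc E r c v : ℝ)^2 * wF E r c x v := h2
    _ ≤ sqFc E r c x := Finset.single_le_sum (f := fun u => (degc E r c u : ℝ)^2 * wF E r c x u)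
        (fun u _ => mul_nonneg (by positivity) (wF_pos E r c x u).le) hvA

lemma cauchy_schwarz_numF (x : ℝ) :
    numF E r c x ^ 2 ≤ sqFc E r c x * ∑ u ∈ ball E r (c+1), wF E r c x u := by
  have h := Finset.sum_mul_sq_le_sq_mul_sq (ball E r (c+1))
    (fun u => (degc E r c u : ℝ) * Real.sqrt (wF E r c x u))
    (fun u => Real.sqrt (wF E r c x u))
  have h1 : ∀ u ∈ ball E r (c+1),
      ((degc E r c u : ℝ) * Real.sqrt (wF E r c x u)) * Real.sqrt (wF E r c x u)
        = (degc E r c u : ℝ) * wF E r c x u := fun u _ => by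
    rw [mul_assoc, Real.mul_self_sqrt (wF_pos E r c x u).le]
  have h2 : ∀ u ∈ ball E r (c+1),
      ((degc E r c u : ℝ) * Real.sqrt (wF E r c x u))^2
        = (degc E r c u : ℝ)^2 * wF E r c x u := fun u _ => by
    rw [mul_pow, Real.sq_sqrt (wF_pos E r c x u).le]
  have h3 : ∀ u ∈ ball E r (c+1),
      (Real.sqrt (wF E r c x u))^2 = wF E r c x u := fun u _ =>
    Real.sq_sqrt (wF_pos E r c x u).le
  rw [Finset.sum_congr rfl h1, Finset.sum_congr rfl h2, Finset.sum_congr rfl h3] at h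
  exact h

lemma FcD_pos (hc0 : (ball E r (c + 1)).card + 1 ≤ Fintype.card V)
    (hdmax : 1 ≤ Finset.univ.sup (degc E r c)) (x : ℝ) : 0 < FcD E r c x := by
  have hL := lamc_pos E r c
  have hden := denF_pos E r c hc0 x
  have hsq := sqFc_pos E r c hdmax x
  have hcs := cauchy_schwarz_numF E r c x
  have hc1 : ((ball E r (c+1)).card : ℝ) + 1 ≤ (Fintype.card V : ℝ) := by exact_mod_cast hc0
  have hkey : numF E r c x ^ 2 < sqFc E r c x * denF E r c x := by
    have hden_expand : denF E r c x = (∑ u ∈ ball E r (c+1), wF E r c x u)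
        + ((Fintype.card V : ℝ) - ((ball E r (c+1)).card : ℝ)) := rfl
    nlinarith [hcs, hsq]
  unfold FcD
  have hnum : 0 < lamc E r c * sqFc E r c x * denF E r c x
      - numF E r c x * (lamc E r c * numF E r c x) := by nlinarith
  positivity

lemma Fc_hasDerivAt (hc0 : (ball E r (c + 1)).card + 1 ≤ Fintype.card V) (x : ℝ) :
    HasDerivAt (Fc E r c) (FcD E r c x) x := by
  have h := (numF_hasDerivAt E r c x).div (denF_hasDerivAt E r c x)
    (ne_of_gt (denF_pos E r c hc0 x))
  exact h

lemma FcD_continuous (hc0 : (ball E r (c + 1)).card + 1 ≤ Fintype.card V) :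
    Continuous (FcD E r c) := by
  have hw : ∀ u : V, Continuous (fun x => wF E r c x u) := by
    intro u
    unfold wF
    exact Real.continuous_exp.comp (continuous_const.mul
      (continuous_const.add (continuous_id.mul continuous_const)))
  have hnum : Continuous (numF E r c) :=
    continuous_finset_sum _ fun u _ => continuous_const.mul (hw u)
  have hden : Continuous (denF E r c) :=
    (continuous_finset_sum _ fun u _ => hw u).add continuous_const
  have hsq : Continuous (sqFc E r c) :=
    continuous_finset_sum _ fun u _ => continuous_const.mul (hw u)
  unfold FcD
  exact ((((continuous_const.mul hsq).mul hden).sub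
    (hnum.mul (continuous_const.mul hnum))).div (hden.pow 2))
    fun x => pow_ne_zero _ (ne_of_gt (denF_pos E r c hc0 x))

lemma tendsto_numF_atBot :
    Filter.Tendsto (numF E r c) Filter.atBot (nhds 0) := by
  have h : Filter.Tendsto (fun x => ∑ u ∈ ball E r (c+1),
      (degc E r c u : ℝ) * wF E r c x u) Filter.atBot
      (nhds (∑ u ∈ ball E r (c+1), (0:ℝ))) := by
    apply tendsto_finset_sum
    intro u _
    rcases Nat.eq_zero_or_pos (degc E r c u) with h0 | h1
    · simp only [h0, Nat.cast_zero, zero_mul]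
      exact tendsto_const_nhds
    · have hd : (0:ℝ) < (degc E r c u : ℝ) := by exact_mod_cast h1
      have hinner : Filter.Tendsto
          (fun x : ℝ => lamc E r c * (chiF E r c u + x * (degc E r c u : ℝ)))
          Filter.atBot Filter.atBot := by
        apply Filter.Tendsto.const_mul_atBot (lamc_pos E r c)
        apply Filter.tendsto_atBot_add_const_left
        exact Filter.Tendsto.atBot_mul_const hd Filter.tendsto_id
      have := Real.tendsto_exp_atBot.comp hinner
      have h2 : Filter.Tendsto (fun x => (degc E r c u : ℝ) * wF E r c x u)
          Filter.atBot (nhds ((degc E r c u : ℝ) * 0)) := Filter.Tendsto.const_mul _ this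
      simpa using h2
  rw [Finset.sum_const_zero] at h; exact h
end Concrete


section Limits
variable {V : Type*} [Fintype V] [DecidableEq V] (E : Finset (V × V)) (r : V) (c : ℕ)

lemma tendsto_Fc_atTop (hc0 : (ball E r (c + 1)).card + 1 ≤ Fintype.card V)
    (hdmax : 1 ≤ Finset.univ.sup (degc E r c)) :
    Filter.Tendsto (Fc E r c) Filter.atTop
      (nhds (((Finset.univ.sup (degc E r c) : ℕ) : ℝ))) := by
  set D := Finset.univ.sup (degc E r c) with hD
  set L := lamc E r c with hLdef
  have hL : 0 < L := lamc_pos E r c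
  have hDpos : (0:ℝ) < (D:ℝ) := by exact_mod_cast hdmax
  set g : V → ℝ → ℝ := fun u x =>
    Real.exp (L * chiF E r c u + L * ((degc E r c u : ℝ) - (D:ℝ)) * x) with hg
  set num2 : ℝ → ℝ := fun x => ∑ u ∈ ball E r (c+1), (degc E r c u : ℝ) * g u x with hnum2
  set den2 : ℝ → ℝ := fun x => (∑ u ∈ ball E r (c+1), g u x)
      + ((Fintype.card V : ℝ) - ((ball E r (c+1)).card : ℝ))
        * Real.exp (-(L*(D:ℝ)) * x) with hden2
  have hwg : ∀ (x : ℝ) (u : V),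
      wF E r c x u * Real.exp (-(L*(D:ℝ)) * x) = g u x := by
    intro x u
    rw [hg]
    unfold wF
    rw [← Real.exp_add]
    congr 1
    ring
  have hFc : ∀ x : ℝ, Fc E r c x = num2 x / den2 x := by
    intro x
    rw [Fc_eq]
    rw [← mul_div_mul_right (numF E r c x) (denF E r c x) (Real.exp_ne_zero (-(L*(D:ℝ))*x))]
    congr 1
    · unfold numF
      rw [Finset.sum_mul]
      exact Finset.sum_congr rfl fun u _ => by rw [mul_assoc, hwg]
    · unfold denF
      rw [add_mul, Finset.sum_mul]
      congr 1
      exact Finset.sum_congr rfl fun u _ => hwg x u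
  set L1 : ℝ := ∑ u ∈ ball E r (c+1),
      (if degc E r c u = D then (D:ℝ) * Real.exp (L * chiF E r c u) else 0) with hL1
  set L2 : ℝ := ∑ u ∈ ball E r (c+1),
      (if degc E r c u = D then Real.exp (L * chiF E r c u) else 0) with hL2
  have hterm : ∀ u ∈ ball E r (c+1), Filter.Tendsto (g u) Filter.atTop
      (nhds (if degc E r c u = D then Real.exp (L * chiF E r c u) else 0)) := by
    intro u _
    by_cases h : degc E r c u = D
    · rw [if_pos h, hg]
      simp only [h, sub_self, mul_zero, zero_mul, add_zero]
      exact tendsto_const_nhds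
    · rw [if_neg h]
      have hlt : degc E r c u < D := lt_of_le_of_ne (Finset.le_sup (Finset.mem_univ u)) h
      have hcoef : L * ((degc E r c u : ℝ) - (D:ℝ)) < 0 := by
        have : (degc E r c u : ℝ) < (D:ℝ) := by exact_mod_cast hlt
        have := sub_neg.2 this
        exact mul_neg_of_pos_of_neg hL this
      have hinner : Filter.Tendsto
          (fun x : ℝ => L * chiF E r c u + L * ((degc E r c u : ℝ) - (D:ℝ)) * x)
          Filter.atTop Filter.atBot := by
        apply Filter.tendsto_atBot_add_const_left
        exact Filter.tendsto_id.const_mul_atTop_of_neg hcoef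
      exact Real.tendsto_exp_atBot.comp hinner
  have hnum : Filter.Tendsto num2 Filter.atTop (nhds L1) := by
    rw [hnum2, hL1]
    apply tendsto_finset_sum
    intro u hu
    have := (hterm u hu).const_mul ((degc E r c u : ℝ))
    by_cases h : degc E r c u = D
    · rw [if_pos h]
      rw [if_pos h] at this
      exact h ▸ this
    · rw [if_neg h]
      rw [if_neg h, mul_zero] at this
      exact this
  have hden : Filter.Tendsto den2 Filter.atTop (nhds (L2 + 0)) := by
    rw [hden2, hL2]
    apply Filter.Tendsto.add
    · exact tendsto_finset_sum _ hterm
    · have hcoef : -(L*(D:ℝ)) < 0 := by nlinarith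
      have hinner : Filter.Tendsto (fun x : ℝ => -(L*(D:ℝ)) * x)
          Filter.atTop Filter.atBot :=
        Filter.tendsto_id.const_mul_atTop_of_neg hcoef
      have := (Real.tendsto_exp_atBot.comp hinner).const_mul
        ((Fintype.card V : ℝ) - ((ball E r (c+1)).card : ℝ))
      simpa using this
  have hL2pos : 0 < L2 := by
    obtain ⟨v, hvA, hvD⟩ := maxdeg_mem E r c hdmax
    have h2 : (0:ℝ) < (if degc E r c v = D then Real.exp (L * chiF E r c v) else 0) := by
      rw [if_pos hvD]
      exact Real.exp_pos _
    calc (0:ℝ) < _ := h2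
      _ ≤ L2 := Finset.single_le_sum
          (f := fun u => if degc E r c u = D then Real.exp (L * chiF E r c u) else 0)
          (fun u _ => by by_cases h : degc E r c u = D <;> simp [h, (Real.exp_pos _).le]) hvA
  have hL1eq : L1 = (D:ℝ) * L2 := by
    rw [hL1, hL2, Finset.mul_sum]
    exact Finset.sum_congr rfl fun u _ => by by_cases h : degc E r c u = D <;> simp [h]
  have htot : Filter.Tendsto (fun x => num2 x / den2 x) Filter.atTop
      (nhds (L1 / (L2 + 0))) := hnum.div hden (by positivity)
  have : L1 / (L2 + 0) = (D:ℝ) := by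
    rw [add_zero, hL1eq, mul_div_assoc, div_self (ne_of_gt hL2pos), mul_one]
  rw [this] at htot
  exact htot.congr fun x => (hFc x).symm

end Limits

/-- when 1 ≤ d* < d_max, the ODE μ' = (α/(n√K))·(d* − F(μ)) started at 0
has a unique finite fixed point μ* with F(μ*) = d*, converges monotonically to it, and
the convergence is exponentially fast. -/
theorem stmt9 {V : Type*} [Fintype V] [DecidableEq V]
    (E : Finset (V × V)) (r : V) (c : ℕ)
    (hc0 : (ball E r (c + 1)).card + 1 ≤ Fintype.card V)
    (hdmax : 1 ≤ Finset.univ.sup (degc E r c))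
    (dstar : ℕ) (hd1 : 1 ≤ dstar) (hd2 : dstar < Finset.univ.sup (degc E r c))
    (α : ℝ) (hα : 0 < α)
    (μ : ℝ → ℝ) (hinit : μ 0 = 0)
    (hode : ∀ t ∈ Set.Ici (0 : ℝ),
      HasDerivWithinAt μ
        ((α / ((Fintype.card V : ℝ) * Real.sqrt ((ball E r c).card : ℝ)))
          * ((dstar : ℝ) - Fc E r c (μ t)))
        (Set.Ici (0 : ℝ)) t) :
    ∃ μstar : ℝ,
      Fc E r c μstar = (dstar : ℝ)
      ∧ (∀ y : ℝ, Fc E r c y = (dstar : ℝ) → y = μstar)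
      ∧ Filter.Tendsto μ Filter.atTop (nhds μstar)
      ∧ (Fc E r c 0 ≤ (dstar : ℝ) → MonotoneOn μ (Set.Ici (0 : ℝ)))
      ∧ ((dstar : ℝ) < Fc E r c 0 → AntitoneOn μ (Set.Ici (0 : ℝ)))
      ∧ ∃ γ : ℝ, 0 < γ ∧ ∃ C : ℝ, 0 ≤ C ∧
          ∀ t ∈ Set.Ici (0 : ℝ), |μ t - μstar| ≤ C * Real.exp (-γ * t) := by
  have hsm : StrictMono (Fc E r c) := strictMono_of_deriv_pos fun x => by
    rw [(Fc_hasDerivAt E r c hc0 x).deriv]; exact FcD_pos E r c hc0 hdmax x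
  have hcont : Continuous (Fc E r c) := by
    rw [continuous_iff_continuousAt]
    exact fun x => (Fc_hasDerivAt E r c hc0 x).continuousAt
  have h1 : ∀ᶠ x in Filter.atBot, numF E r c x < 1 :=
    (tendsto_numF_atBot E r c).eventually_lt_const one_pos
  obtain ⟨x₁, hx₁⟩ := h1.exists
  have hFx₁ : Fc E r c x₁ < (dstar:ℝ) := by
    have hle : Fc E r c x₁ ≤ numF E r c x₁ := by
      rw [Fc_eq]; exact div_le_self (numF_nonneg E r c x₁) (denF_ge_one E r c hc0 x₁)
    have : (1:ℝ) ≤ (dstar:ℝ) := by exact_mod_cast hd1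
    linarith
  have hDlt : (dstar:ℝ) < ((Finset.univ.sup (degc E r c) : ℕ):ℝ) := by exact_mod_cast hd2
  have h2 : ∀ᶠ x in Filter.atTop, (dstar:ℝ) < Fc E r c x :=
    (tendsto_Fc_atTop E r c hc0 hdmax).eventually_const_lt hDlt
  obtain ⟨x₂, hx₂⟩ := h2.exists
  have hx12 : x₁ < x₂ := by
    by_contra h
    push_neg at h
    have := hsm.monotone h
    linarith
  obtain ⟨mstar, -, hmstar⟩ := intermediate_value_Icc hx12.le hcont.continuousOn
    (show (dstar:ℝ) ∈ Set.Icc (Fc E r c x₁) (Fc E r c x₂) from ⟨hFx₁.le, hx₂.le⟩)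
  have hk : 0 < α / ((Fintype.card V : ℝ) * Real.sqrt ((ball E r c).card : ℝ)) := by
    have hn : 0 < (Fintype.card V : ℝ) := by
      have : 0 < Fintype.card V := Fintype.card_pos_iff.2 ⟨r⟩
      exact_mod_cast this
    have hK : (0:ℝ) < Real.sqrt ((ball E r c).card : ℝ) := by
      have h : 0 < (ball E r c).card := Finset.card_pos.2 ⟨r, mem_ball_self E r c⟩
      have : (0:ℝ) < ((ball E r c).card:ℝ) := by exact_mod_cast h
      exact Real.sqrt_pos.2 this
    positivity
  obtain ⟨htend, hmono, hanti, γ, hγ, C, hC, hbound⟩ :=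
    odeMain (Fc E r c) (FcD E r c) (Fc_hasDerivAt E r c hc0) (FcD_pos E r c hc0 hdmax)
      (FcD_continuous E r c hc0) (dstar:ℝ) mstar hmstar
      (α / ((Fintype.card V : ℝ) * Real.sqrt ((ball E r c).card : ℝ))) hk μ hinit hode
  exact ⟨mstar, hmstar, fun y hy => hsm.injective (hy.trans hmstar.symm),
    htend, hmono, hanti, γ, hγ, C, hC, hbound⟩
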